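/- Let n, d be natural numbers and c : ℝ^d → ℝ^n be any function. Let u : ℝ^n × ℝ → ℝ^d be continuously Fréchet differentiable and satisfy the d'Alembert transport equation ∂_τ u(ξ, τ) + D_ξ u(ξ, τ)(c(u(ξ, τ))) = 0 for all (ξ, τ) in an open set Ω ⊆ ℝ^n × ℝ. Fix (x, t) ∈ ℝ^n × ℝ, set l(ξ, τ) = √(‖x − ξ‖² + (t − τ)²), and let M : ℝ^d × ℝ^n × ℝ → ℝ^d be continuously Fréchet differentiable with l(ξ, τ) • M(u(ξ, τ), ξ, τ) = u(x, t) − u(ξ, τ) for all (ξ, τ) ∈ Ω. Then at every (ξ, τ) ∈ Ω with l(ξ, τ) > 0, the MeanFlow constraint for d'Alembert's equation holds: (t − τ + ⟪x − ξ, c(u(ξ, τ))⟫) • M(u(ξ, τ), ξ, τ) = l(ξ, τ)² • [ D_ξ M(u(ξ, τ), ξ, τ)(c(u(ξ, τ))) + ∂_τ M(u(ξ, τ), ξ, τ) ]. -/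

import Mathlib

open scoped RealInnerProductSpace

/-- MeanFlow constraint for d'Alembert's transport equation.
Partial derivatives are encoded via the full Fréchet derivative:
`∂_τ u (ξ, τ) = fderiv ℝ u (ξ, τ) (0, 1)`,
`D_ξ u (ξ, τ) w = fderiv ℝ u (ξ, τ) (w, 0)`,
`D_ξ M (u, ξ, τ) w = fderiv ℝ M (u, ξ, τ) (0, w, 0)`, and
`∂_τ M (u, ξ, τ) = fderiv ℝ M (u, ξ, τ) (0, 0, 1)`. -/
theorem stmt_13 (n d : ℕ)
    (c : EuclideanSpace ℝ (Fin d) → EuclideanSpace ℝ (Fin n))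
    (u : EuclideanSpace ℝ (Fin n) × ℝ → EuclideanSpace ℝ (Fin d))
    (hu : ContDiff ℝ 1 u)
    (Ω : Set (EuclideanSpace ℝ (Fin n) × ℝ)) (hΩ : IsOpen Ω)
    (hpde : ∀ p ∈ Ω,
      fderiv ℝ u p (0, 1) + fderiv ℝ u p (c (u p), 0) = 0)
    (x : EuclideanSpace ℝ (Fin n)) (t : ℝ)
    (l : EuclideanSpace ℝ (Fin n) × ℝ → ℝ)
    (hl : ∀ ξ τ, l (ξ, τ) = Real.sqrt (‖x - ξ‖ ^ 2 + (t - τ) ^ 2))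
    (M : EuclideanSpace ℝ (Fin d) × EuclideanSpace ℝ (Fin n) × ℝ →
      EuclideanSpace ℝ (Fin d))
    (hM : ContDiff ℝ 1 M)
    (hfund : ∀ p ∈ Ω, l p • M (u p, p.1, p.2) = u (x, t) - u p) :
    ∀ ξ τ, (ξ, τ) ∈ Ω → 0 < l (ξ, τ) →
      (t - τ + ⟪x - ξ, c (u (ξ, τ))⟫) • M (u (ξ, τ), ξ, τ)
        = l (ξ, τ) ^ 2 •
          ((fderiv ℝ M (u (ξ, τ), ξ, τ)) (0, c (u (ξ, τ)), 0)
            + (fderiv ℝ M (u (ξ, τ), ξ, τ)) (0, 0, 1)) := by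
  intro ξ τ hmem hlpos
  set p : EuclideanSpace ℝ (Fin n) × ℝ := (ξ, τ) with hp
  set κ : EuclideanSpace ℝ (Fin n) := c (u p) with hκ
  have hl' : l = fun q : EuclideanSpace ℝ (Fin n) × ℝ =>
      Real.sqrt (‖x - q.1‖ ^ 2 + (t - q.2) ^ 2) := funext fun q => hl q.1 q.2
  -- derivative of the inside of the sqrt
  have h1 : HasFDerivAt (fun q : EuclideanSpace ℝ (Fin n) × ℝ => x - q.1)
      (0 - ContinuousLinearMap.fst ℝ (EuclideanSpace ℝ (Fin n)) ℝ) p :=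
    (hasFDerivAt_const x p).sub (hasFDerivAt_fst)
  have h2 : HasFDerivAt (fun q : EuclideanSpace ℝ (Fin n) × ℝ => t - q.2)
      (0 - ContinuousLinearMap.snd ℝ (EuclideanSpace ℝ (Fin n)) ℝ) p :=
    (hasFDerivAt_const t p).sub (hasFDerivAt_snd)
  have h2' := h2.norm_sq
  have h2'' : HasFDerivAt (fun q : EuclideanSpace ℝ (Fin n) × ℝ => (t - q.2) ^ 2)
      (2 • (innerSL ℝ (t - p.2)).comp
        (0 - ContinuousLinearMap.snd ℝ (EuclideanSpace ℝ (Fin n)) ℝ)) p := by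
    refine h2'.congr_of_eventuallyEq (Filter.Eventually.of_forall fun q => ?_)
    simp [Real.norm_eq_abs, sq_abs]
  have hg : HasFDerivAt (fun q : EuclideanSpace ℝ (Fin n) × ℝ =>
      ‖x - q.1‖ ^ 2 + (t - q.2) ^ 2)
      ((2 • (innerSL ℝ (x - p.1)).comp
        (0 - ContinuousLinearMap.fst ℝ (EuclideanSpace ℝ (Fin n)) ℝ)) +
       (2 • (innerSL ℝ (t - p.2)).comp
        (0 - ContinuousLinearMap.snd ℝ (EuclideanSpace ℝ (Fin n)) ℝ))) p :=
    h1.norm_sq.add h2''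
  have hlp : l p = Real.sqrt (‖x - ξ‖ ^ 2 + (t - τ) ^ 2) := hl ξ τ
  have hne : (‖x - ξ‖ ^ 2 + (t - τ) ^ 2) ≠ 0 := by
    intro h0
    rw [hlp, h0, Real.sqrt_zero] at hlpos
    exact lt_irrefl 0 hlpos
  have hld : HasFDerivAt l ((1 / (2 * Real.sqrt (‖x - ξ‖ ^ 2 + (t - τ) ^ 2))) •
      ((2 • (innerSL ℝ (x - p.1)).comp
        (0 - ContinuousLinearMap.fst ℝ (EuclideanSpace ℝ (Fin n)) ℝ)) +
       (2 • (innerSL ℝ (t - p.2)).comp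
        (0 - ContinuousLinearMap.snd ℝ (EuclideanSpace ℝ (Fin n)) ℝ)))) p := by
    rw [hl']
    exact hg.sqrt hne
  -- derivative of u and of the composed M
  have hud : HasFDerivAt u (fderiv ℝ u p) p := (hu.differentiable one_ne_zero p).hasFDerivAt
  have hMd : HasFDerivAt M (fderiv ℝ M (u p, p)) (u p, p) :=
    (hM.differentiable one_ne_zero (u p, p)).hasFDerivAt
  have hMc : HasFDerivAt (fun q : EuclideanSpace ℝ (Fin n) × ℝ => M (u q, q.1, q.2))
      ((fderiv ℝ M (u p, p)).comp
        ((fderiv ℝ u p).prod (ContinuousLinearMap.id ℝ _))) p :=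
    HasFDerivAt.comp p hMd (hud.prodMk (hasFDerivAt_id p))
  -- derivative of both sides of the fundamental identity
  have hFd := hld.smul hMc
  have hGd : HasFDerivAt (fun q => u (x, t) - u q) (0 - fderiv ℝ u p) p :=
    (hasFDerivAt_const (u (x, t)) p).sub hud
  have heq : (fun q : EuclideanSpace ℝ (Fin n) × ℝ => l q • M (u q, q.1, q.2)) =ᶠ[nhds p]
      (fun q => u (x, t) - u q) := by
    filter_upwards [hΩ.mem_nhds hmem] with q hq
    exact hfund q hq
  have hFd' : HasFDerivAt (fun q : EuclideanSpace ℝ (Fin n) × ℝ => l q • M (u q, q.1, q.2))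
      (0 - fderiv ℝ u p) p := hGd.congr_of_eventuallyEq heq
  have hD := hFd.unique hFd'
  -- evaluate at direction (κ, 1)
  have hv := congrArg (fun (L : (EuclideanSpace ℝ (Fin n) × ℝ) →L[ℝ]
      EuclideanSpace ℝ (Fin d)) => L (κ, 1)) hD
  simp only [ContinuousLinearMap.add_apply, ContinuousLinearMap.smul_apply,
    ContinuousLinearMap.smulRight_apply, ContinuousLinearMap.comp_apply,
    ContinuousLinearMap.prod_apply, ContinuousLinearMap.coe_smul',
    ContinuousLinearMap.sub_apply, ContinuousLinearMap.zero_apply,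
    ContinuousLinearMap.coe_fst', ContinuousLinearMap.coe_snd',
    ContinuousLinearMap.id_apply, Pi.smul_apply, innerSL_apply_apply] at hv
  have huv : fderiv ℝ u p (κ, 1) = 0 := by
    have hsplit : ((κ, 1) : EuclideanSpace ℝ (Fin n) × ℝ) = (κ, 0) + (0, 1) := by simp
    rw [hsplit, map_add, add_comm]
    exact hpde p hmem
  have hsplit3 : ((0, κ, 1) : EuclideanSpace ℝ (Fin d) × EuclideanSpace ℝ (Fin n) × ℝ)
      = (0, κ, 0) + (0, 0, 1) := by simp
  rw [huv] at hv
  rw [show ((0 : EuclideanSpace ℝ (Fin d)), κ, (1:ℝ)) = (0, κ, 0) + (0, 0, 1) from by simp,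
    map_add] at hv
  simp only [zero_sub, sub_zero, inner_neg_right, zero_sub, neg_neg, smul_eq_mul,
    real_inner_comm] at hv
  have hlne : l p ≠ 0 := ne_of_gt hlpos
  have hc : 1 / (2 * Real.sqrt (‖x - ξ‖ ^ 2 + (t - τ) ^ 2)) *
      (2 • -(inner ℝ (x - ξ) κ : ℝ) + 2 • -(inner ℝ (t - τ) (1:ℝ) : ℝ))
      = -((t - τ + (inner ℝ (x - ξ) κ : ℝ)) / l p) := by
    have h1 : (inner ℝ (t - τ) (1:ℝ) : ℝ) = t - τ := by
      simp [RCLike.inner_apply]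
    rw [h1, ← hlp]
    field_simp
    ring
  rw [real_inner_comm (x - p.1) κ, real_inner_comm (t - p.2) (1:ℝ)] at hv
  change _ + (1 / (2 * Real.sqrt (‖x - ξ‖ ^ 2 + (t - τ) ^ 2)) *
      (2 • -(inner ℝ (x - ξ) κ : ℝ) + 2 • -(inner ℝ (t - τ) (1:ℝ) : ℝ))) • M (u p, p.1, p.2) = 0 at hv
  rw [hc, neg_smul] at hv
  have hS : l p • ((fderiv ℝ M (u p, p)) (0, κ, 0) + (fderiv ℝ M (u p, p)) (0, 0, 1))
      = ((t - τ + (inner ℝ (x - ξ) κ : ℝ)) / l p) • M (u p, ξ, τ) := by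
    have := add_neg_eq_zero.mp hv
    exact this
  calc (t - τ + (inner ℝ (x - ξ) κ : ℝ)) • M (u p, p)
      = (((t - τ + (inner ℝ (x - ξ) κ : ℝ)) / l p) * l p) • M (u p, p) := by
        rw [div_mul_cancel₀ _ hlne]
    _ = l p • (((t - τ + (inner ℝ (x - ξ) κ : ℝ)) / l p) • M (u p, p)) := by
        rw [← smul_smul, smul_comm]
    _ = l p • (l p • ((fderiv ℝ M (u p, p)) (0, κ, 0) + (fderiv ℝ M (u p, p)) (0, 0, 1))) := by
        rw [hS]
    _ = l p ^ 2 • ((fderiv ℝ M (u p, p)) (0, κ, 0) + (fderiv ℝ M (u p, p)) (0, 0, 1)) := by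
        rw [← mul_smul, ← sq]
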